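/- arXiv:1307.5836 — 8 statements merged into one kernel-verified Lean document; each statement's English description precedes it below -/
import Mathlib

section
/- Let X be a locally compact Hausdorff space. If X has a sequence of compact subsets whose union is dense in X, then there exists a positive function g ∈ C₀(X) (continuous functions vanishing at infinity) that is not a zero divisor in C₀(X), i.e., for all h ∈ C₀(X), g * h = 0 implies h = 0. -/
open scoped ZeroAtInfty ComplexOrder

/-- If a locally compact Hausdorff space has a sequence of compact subsets with dense
union, then `C₀(X)` has a positive element that is not a zero divisor. -/
theorem stmt_2 {X : Type*} [TopologicalSpace X] [LocallyCompactSpace X] [T2Space X]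
    (K : ℕ → Set X) (hK : ∀ n, IsCompact (K n)) (hdense : Dense (⋃ n, K n)) :
    ∃ g : C₀(X, ℂ), (∀ x, 0 ≤ g x) ∧ ∀ h : C₀(X, ℂ), g * h = 0 → h = 0 := by
  -- choose Urysohn functions equal to 1 on `K n`, with compact support, valued in `[0,1]`
  have hf : ∀ n, ∃ f : C(X, ℝ), Set.EqOn f 1 (K n) ∧ HasCompactSupport f ∧
      ∀ x, f x ∈ Set.Icc (0 : ℝ) 1 := by
    intro n
    obtain ⟨f, h1, _h0, hc, hi⟩ := exists_continuous_one_zero_of_isCompact (hK n)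
      isClosed_empty (Set.disjoint_empty _)
    exact ⟨f, h1, hc, hi⟩
  choose f hf1 hfc hfi using hf
  -- the complex-valued compactly supported scaled versions, as elements of C₀
  have hcs : ∀ n, HasCompactSupport (fun x => (((2:ℝ)⁻¹ ^ n * f n x : ℝ) : ℂ)) := by
    intro n
    exact (hfc n).comp_left (g := fun r : ℝ => (((2:ℝ)⁻¹ ^ n * r : ℝ) : ℂ)) (by simp)
  let F : ℕ → C₀(X, ℂ) := fun n =>
    ⟨⟨fun x => (((2:ℝ)⁻¹ ^ n * f n x : ℝ) : ℂ), by fun_prop⟩,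
      (hcs n).is_zero_at_infty⟩
  have hFapp : ∀ n x, F n x = (((2:ℝ)⁻¹ ^ n * f n x : ℝ) : ℂ) := fun n x => rfl
  have hgeo : Summable fun n : ℕ => ((2:ℝ)⁻¹) ^ n :=
    summable_geometric_of_lt_one (by norm_num) (by norm_num)
  -- pointwise real sums
  have htermnn : ∀ n x, 0 ≤ (2:ℝ)⁻¹ ^ n * f n x := fun n x =>
    mul_nonneg (by positivity) (hfi n x).1
  have htermle : ∀ n x, (2:ℝ)⁻¹ ^ n * f n x ≤ (2:ℝ)⁻¹ ^ n := fun n x => by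
    nlinarith [(hfi n x).2, pow_nonneg (by norm_num : (0:ℝ) ≤ 2⁻¹) n]
  have hsumx : ∀ x, Summable fun n => (2:ℝ)⁻¹ ^ n * f n x := by
    intro x
    exact Summable.of_nonneg_of_le (fun n => htermnn n x) (fun n => htermle n x) hgeo
  set S : X → ℝ := fun x => ∑' n, (2:ℝ)⁻¹ ^ n * f n x with hS
  -- summability in C₀
  have hnorm : ∀ n, ‖F n‖ ≤ (2:ℝ)⁻¹ ^ n := by
    intro n
    rw [← ZeroAtInftyContinuousMap.norm_toBCF_eq_norm]
    rw [BoundedContinuousFunction.norm_le (by positivity)]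
    intro x
    show ‖F n x‖ ≤ _
    rw [hFapp, Complex.norm_real, Real.norm_eq_abs, abs_of_nonneg (htermnn n x)]
    exact htermle n x
  have hsumF : Summable F := by
    apply Summable.of_norm_bounded hgeo hnorm
  refine ⟨∑' n, F n, ?_, ?_⟩
  all_goals
    have hgx : ∀ x : X, (∑' n, F n) x = (S x : ℂ) := by
      intro x
      have h1 : HasSum (fun n => F n x) ((∑' n, F n) x) := by
        have := hsumF.hasSum
        have hcont : Continuous fun u : C₀(X, ℂ) => u x :=
          (BoundedContinuousFunction.evalCLM ℂ x).continuous.comp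
            ZeroAtInftyContinuousMap.isometry_toBCF.continuous
        exact this.map (AddMonoidHom.mk' (fun u : C₀(X, ℂ) => u x) (fun a b => rfl)) hcont
      have h2 : HasSum (fun n => F n x) ((S x : ℝ) : ℂ) := by
        have := ((hsumx x).hasSum).mapL Complex.ofRealCLM
        simpa [hFapp, hS] using this
      exact h1.unique h2
  · intro x
    rw [hgx x]
    exact Complex.zero_le_real.mpr (tsum_nonneg fun n => htermnn n x)
  · intro h hmul
    have hzero : ∀ x ∈ ⋃ n, K n, h x = 0 := by
      intro x hx
      obtain ⟨m, hm⟩ := Set.mem_iUnion.mp hx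
      have hpos : 0 < S x := by
        have hle : (2:ℝ)⁻¹ ^ m * f m x ≤ S x :=
          Summable.le_tsum (hsumx x) m (fun n _ => htermnn n x)
        have : f m x = 1 := hf1 m hm
        rw [this, mul_one] at hle
        exact lt_of_lt_of_le (by positivity) hle
      have hne : (∑' n, F n) x ≠ 0 := by
        rw [hgx x]
        exact_mod_cast hpos.ne'
      have : (∑' n, F n) x * h x = 0 := by
        have := congrFun (congrArg DFunLike.coe hmul) x
        simpa using this
      exact (mul_eq_zero.mp this).resolve_left hne
    have : (h : X → ℂ) = (0 : X → ℂ) :=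
      Continuous.ext_on hdense (map_continuous h) continuous_const hzero
    ext x
    exact congrFun this x
end

section
/- A commutative C*-algebra C₀(X), for X a locally compact Hausdorff space, is a Z*-algebra (every positive element is a zero divisor) if and only if X is not approximately σ-compact (X does not admit a sequence of compact subsets with dense union). -/
open scoped ZeroAtInfty ComplexOrder

open Set Filter Topology

namespace ZStarAux

variable {X : Type*} [TopologicalSpace X] [LocallyCompactSpace X] [T2Space X]

/-- Evaluation at a point as a continuous linear map on `C₀(X, ℂ)`. -/
noncomputable def evalCLM (x : X) : C₀(X, ℂ) →L[ℂ] ℂ :=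
  LinearMap.mkContinuous
    { toFun := fun f => f x
      map_add' := fun f g => rfl
      map_smul' := fun c f => rfl } 1
    (fun f => by
      have : ‖f x‖ ≤ ‖f.toBCF‖ := f.toBCF.norm_coe_le_norm x
      simpa [ZeroAtInftyContinuousMap.norm_toBCF_eq_norm] using this)

omit [LocallyCompactSpace X] [T2Space X] in
@[simp] lemma evalCLM_apply (x : X) (f : C₀(X, ℂ)) : evalCLM x f = f x := rfl

end ZStarAux

/-- `C₀(X)` is a Z*-algebra (every positive element is a zero divisor) iff `X` is not
approximately σ-compact. -/
theorem stmt_5 {X : Type*} [TopologicalSpace X] [LocallyCompactSpace X] [T2Space X] :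
    (∀ g : C₀(X, ℂ), (∀ x, 0 ≤ g x) → ∃ h : C₀(X, ℂ), h ≠ 0 ∧ g * h = 0) ↔
      ¬ ∃ K : ℕ → Set X, (∀ n, IsCompact (K n)) ∧ Dense (⋃ n, K n) := by
  constructor
  · -- Z* → ¬ AσC
    rintro hZ ⟨K, hKc, hKd⟩
    -- build bump functions
    have hf : ∀ n : ℕ, ∃ f : C(X, ℝ), Set.EqOn f 1 (K n) ∧ HasCompactSupport f ∧
        ∀ x, f x ∈ Set.Icc (0:ℝ) 1 := by
      intro n
      obtain ⟨f, h1, _, hsupp, hbd⟩ :=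
        exists_continuous_one_zero_of_isCompact (hKc n) isClosed_empty (disjoint_empty _)
      exact ⟨f, h1, hsupp, hbd⟩
    choose f hf1 hfs hfb using hf
    -- the real pointwise series
    set s : ℕ → X → ℝ := fun n x => (2:ℝ)⁻¹ ^ n * f n x with hs
    have hs_nonneg : ∀ n x, 0 ≤ s n x := fun n x =>
      mul_nonneg (by positivity) (hfb n x).1
    have hs_le : ∀ n x, s n x ≤ (2:ℝ)⁻¹ ^ n := fun n x => by
      have := (hfb n x).2
      calc s n x ≤ (2:ℝ)⁻¹ ^ n * 1 := by
            exact mul_le_mul_of_nonneg_left this (by positivity)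
        _ = (2:ℝ)⁻¹ ^ n := mul_one _
    have hgeo : Summable (fun n : ℕ => (2:ℝ)⁻¹ ^ n) :=
      summable_geometric_of_lt_one (by norm_num) (by norm_num)
    have hs_summ : ∀ x, Summable (fun n => s n x) := fun x =>
      hgeo.of_nonneg_of_le (fun n => hs_nonneg n x) (fun n => hs_le n x)
    -- elements of C₀
    have hFzero : ∀ n : ℕ, Filter.Tendsto (fun x => ((s n x : ℝ) : ℂ))
        (Filter.cocompact X) (nhds 0) := by
      intro n
      have h1 : HasCompactSupport (fun x => ((s n x : ℝ) : ℂ)) := by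
        have : HasCompactSupport (s n) := ((hfs n).mul_left)
        exact this.comp_left (g := fun r : ℝ => (r : ℂ)) (by simp)
      exact h1.is_zero_at_infty
    set F : ℕ → C₀(X, ℂ) := fun n =>
      ⟨⟨fun x => ((s n x : ℝ) : ℂ), by
        exact Complex.continuous_ofReal.comp
          (Continuous.mul continuous_const (f n).continuous)⟩, hFzero _⟩ with hF
    have hFapp : ∀ n x, F n x = ((s n x : ℝ) : ℂ) := fun n x => rfl
    have hFnorm : ∀ n, ‖F n‖ ≤ (2:ℝ)⁻¹ ^ n := by
      intro n
      rw [← ZeroAtInftyContinuousMap.norm_toBCF_eq_norm]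
      refine BoundedContinuousFunction.norm_le (by positivity) |>.mpr fun x => ?_
      have : ‖F n x‖ = |s n x| := by
        rw [hFapp]; exact (Complex.norm_real _).trans (Real.norm_eq_abs _)
      rw [show ((F n).toBCF x) = F n x from rfl, this, abs_of_nonneg (hs_nonneg n x)]
      exact hs_le n x
    have hFsumm : Summable F :=
      Summable.of_norm (hgeo.of_nonneg_of_le (fun n => norm_nonneg _) hFnorm)
    set g : C₀(X, ℂ) := ∑' n, F n with hg
    have hgx : ∀ x, g x = ((∑' n, s n x : ℝ) : ℂ) := by
      intro x
      have h1 : g x = ∑' n, F n x := by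
        have := (ZStarAux.evalCLM (X := X) x).map_tsum hFsumm
        simpa using this
      rw [h1]
      have h2 := (Complex.ofRealCLM.map_tsum (hs_summ x)).symm
      simpa [hFapp] using h2
    have hg_nonneg : ∀ x, 0 ≤ g x := by
      intro x
      rw [hgx]
      exact Complex.zero_le_real.mpr (tsum_nonneg fun n => hs_nonneg n x)
    obtain ⟨h, hh0, hgh⟩ := hZ g hg_nonneg
    -- g is nonzero on ⋃ K n
    have hgne : ∀ x ∈ ⋃ n, K n, g x ≠ 0 := by
      rintro x hx
      obtain ⟨_, ⟨m, rfl⟩, hxm⟩ := hx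
      rw [hgx]
      have hpos : 0 < ∑' n, s n x := by
        have hle : (2:ℝ)⁻¹ ^ m ≤ ∑' n, s n x := by
          have := Summable.le_tsum (hs_summ x) m (fun n _ => hs_nonneg n x)
          have hfm : f m x = 1 := hf1 m hxm
          have hsm : s m x = (2:ℝ)⁻¹ ^ m := by simp [hs, hfm]
          rwa [hsm] at this
        calc (0:ℝ) < (2:ℝ)⁻¹ ^ m := by positivity
          _ ≤ _ := hle
      exact_mod_cast Complex.ofReal_ne_zero.mpr (ne_of_gt hpos)
    -- h vanishes on the dense union, hence h = 0
    have hhx : ∀ x ∈ ⋃ n, K n, h x = 0 := by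
      intro x hx
      have : g x * h x = 0 := by
        have := congrArg (fun f : C₀(X, ℂ) => f x) hgh
        simpa using this
      exact (mul_eq_zero.mp this).resolve_left (hgne x hx)
    have : (h : X → ℂ) = 0 := by
      have := Continuous.ext_on hKd (map_continuous h) continuous_const hhx
      exact this
    exact hh0 (ZeroAtInftyContinuousMap.ext fun x => congrFun this x)
  · -- ¬ AσC → Z*
    intro hA g _
    -- the cozero set of g is not dense
    have hnd : ¬ Dense {x | g x ≠ 0} := by
      intro hd
      refine hA ⟨fun n => {x | ((n:ℝ)+1)⁻¹ ≤ ‖g x‖}, fun n => ?_, ?_⟩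
      · -- compact
        have hcl : IsClosed {x | ((n:ℝ)+1)⁻¹ ≤ ‖g x‖} :=
          isClosed_le continuous_const ((map_continuous g).norm)
        have hmem : {x | ‖g x‖ < ((n:ℝ)+1)⁻¹} ∈ Filter.cocompact X := by
          have := g.zero_at_infty'
          have hball : Metric.ball (0:ℂ) (((n:ℝ)+1)⁻¹) ∈ nhds (0:ℂ) :=
            Metric.ball_mem_nhds _ (by positivity)
          have h2 := this hball
          have h3 : g.toFun ⁻¹' Metric.ball (0:ℂ) (((n:ℝ)+1)⁻¹) = {x | ‖g x‖ < ((n:ℝ)+1)⁻¹} := by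
            ext y; simp [Metric.mem_ball, dist_zero_right]
          rwa [Filter.mem_map, h3] at h2
        obtain ⟨C, hC, hsub⟩ := Filter.hasBasis_cocompact.mem_iff.mp hmem
        refine hC.of_isClosed_subset hcl fun x hx => ?_
        by_contra hxC
        exact absurd (hsub hxC) (by simpa using hx)
      · -- dense
        refine hd.mono fun x hx => ?_
        have hpos : 0 < ‖g x‖ := by simpa [norm_pos_iff] using hx
        obtain ⟨n, hn⟩ := exists_nat_one_div_lt hpos
        exact Set.mem_iUnion.mpr ⟨n, by
          simpa [one_div] using hn.le⟩
    -- pick a point outside the closure of the cozero set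
    rw [dense_iff_closure_eq] at hnd
    have hne : (closure {x | g x ≠ 0})ᶜ.Nonempty := by
      rw [Set.nonempty_compl]
      intro hcl
      exact hnd (by rw [hcl])
    obtain ⟨x₀, hx₀⟩ := hne
    have hUopen : IsOpen (closure {x | g x ≠ 0})ᶜ := isClosed_closure.isOpen_compl
    -- Urysohn bump at x₀ inside U
    obtain ⟨f, hf1, hf0, hfs, hfb⟩ :=
      exists_continuous_one_zero_of_isCompact (isCompact_singleton (x := x₀))
        isClosed_closure (by simpa [Set.disjoint_singleton_left] using hx₀)
    have hfzero : Filter.Tendsto (fun x => ((f x : ℝ) : ℂ)) (Filter.cocompact X) (nhds 0) := by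
      have h1 : HasCompactSupport (fun x => ((f x : ℝ) : ℂ)) :=
        hfs.comp_left (g := fun r : ℝ => (r : ℂ)) (by simp)
      exact h1.is_zero_at_infty
    refine ⟨⟨⟨fun x => ((f x : ℝ) : ℂ),
      Complex.continuous_ofReal.comp f.continuous⟩, hfzero⟩, ?_, ?_⟩
    · intro h0
      have := congrArg (fun f : C₀(X, ℂ) => f x₀) h0
      simp [hf1 (Set.mem_singleton x₀)] at this
    · apply ZeroAtInftyContinuousMap.ext
      intro x
      show g x * ((f x : ℝ) : ℂ) = 0
      by_cases hx : x ∈ closure {y | g y ≠ 0}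
      · have h0 : f x = 0 := hf0 hx
        simp [h0]
      · have hgx : g x = 0 := by
          by_contra hgx
          exact hx (subset_closure hgx)
        simp [hgx]
end

section
/- Every essential closed two-sided ideal of a Z*-algebra is itself a Z*-algebra: if A is a C*-algebra in which every positive element is a zero divisor, and J is an essential closed two-sided ideal of A, then every positive element of J is a zero divisor within J. -/
/-- Every essential closed two-sided ideal of a Z*-algebra is a Z*-algebra: each positive
element of `J` is annihilated by some nonzero element of `J`. -/
theorem stmt_7 {A : Type*} [NonUnitalCStarAlgebra A] [PartialOrder A] [StarOrderedRing A]
    (hA : ∀ a : A, 0 ≤ a → ∃ x : A, x ≠ 0 ∧ a * x = 0)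
    (J : TwoSidedIdeal A) (hJclosed : IsClosed (J : Set A))
    (hJess : ∀ I : TwoSidedIdeal A, IsClosed (I : Set A) → I ≠ ⊥ →
      ∃ x, x ∈ J ∧ x ∈ I ∧ x ≠ 0) :
    ∀ a ∈ J, 0 ≤ a → ∃ x ∈ J, x ≠ 0 ∧ a * x = 0 := by
  intro a haJ ha
  obtain ⟨x, hx0, hax⟩ := hA a ha
  -- It suffices to find j ∈ J with x * j ≠ 0.
  by_cases hxJ : ∃ j ∈ J, x * j ≠ 0
  · obtain ⟨j, hjJ, hxj⟩ := hxJ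
    exact ⟨x * j, J.mul_mem_left _ _ hjJ, hxj, by rw [← mul_assoc, hax, zero_mul]⟩
  · push_neg at hxJ
    exfalso
    -- The left annihilator of J is a nonzero closed two-sided ideal.
    set L : TwoSidedIdeal A := TwoSidedIdeal.mk' {c : A | ∀ j ∈ J, c * j = 0}
      (by intro j hj; simp)
      (by intro c d hc hd j hj; rw [add_mul, hc j hj, hd j hj, add_zero])
      (by intro c hc j hj; rw [neg_mul, hc j hj, neg_zero])
      (by intro c d hd j hj; rw [mul_assoc, hd j hj, mul_zero])
      (by intro c d hc j hj; rw [mul_assoc, hc (d * j) (J.mul_mem_left _ _ hj)])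
      with hLdef
    have hmemL : ∀ c : A, c ∈ L ↔ ∀ j ∈ J, c * j = 0 := by
      intro c; rw [hLdef, TwoSidedIdeal.mem_mk']; rfl
    have hLclosed : IsClosed (L : Set A) := by
      have : (L : Set A) = ⋂ j ∈ (J : Set A), {c : A | c * j = 0} := by
        ext c
        simp only [SetLike.mem_coe, hmemL, Set.mem_iInter, Set.mem_setOf_eq]
      rw [this]
      exact isClosed_biInter fun j _ =>
        isClosed_eq (continuous_id.mul continuous_const) continuous_const
    have hLne : L ≠ ⊥ := by
      intro h
      have : x ∈ L := (hmemL x).2 hxJ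
      rw [h, TwoSidedIdeal.mem_bot] at this
      exact hx0 this
    obtain ⟨c, hcJ, hcL, hc0⟩ := hJess L hLclosed hLne
    -- c * (star c * c) = 0 since star c * c ∈ J
    have key : c * (star c * c) = 0 := (hmemL c).1 hcL _ (J.mul_mem_left _ _ hcJ)
    have h2 : (star c * c) * (star c * c) = 0 := by
      calc (star c * c) * (star c * c) = star c * (c * (star c * c)) := by
            simp [mul_assoc]
        _ = 0 := by rw [key, mul_zero]
    have h3 : star c * c = 0 := by
      have hn : ‖star c * c‖ * ‖star c * c‖ = 0 := by
        rw [← CStarRing.norm_star_mul_self (x := star c * c), star_mul, star_star]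
        simp only [← mul_assoc] at h2 ⊢
        rw [h2, norm_zero]
      have := mul_self_eq_zero.mp hn
      rwa [norm_eq_zero] at this
    have : ‖c‖ * ‖c‖ = 0 := by rw [← CStarRing.norm_star_mul_self, h3, norm_zero]
    exact hc0 (norm_eq_zero.mp (mul_self_eq_zero.mp this))
end

section
/- Let C be a C*-algebra with approximate identity (√h_α) where 0 ≤ h_α ≤ 1, and let y be a self-adjoint element of C. For every real λ with s(y) ≤ λ (where s(y) is the maximum of the spectrum of y) and every ε > 0, there exists an index α such that s(y − λ·h_α) ≤ ε. -/
open Filter Topology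

/-- The maximum of the spectrum of a self-adjoint element, computed in the unitization. -/
noncomputable def specMax {C : Type*} [NonUnitalCStarAlgebra C] (y : C) : ℝ :=
  sSup (spectrum ℝ (y : Unitization ℂ C))

/-- If `(√h_i)` is an approximate identity with `0 ≤ h_i ≤ 1`, `y` is self-adjoint and
`s(y) ≤ λ`, then for every `ε > 0` some index `i` satisfies `s(y - λ·h_i) ≤ ε`. -/
theorem stmt_8 {C : Type*} [NonUnitalCStarAlgebra C] [PartialOrder C] [StarOrderedRing C]
    {ι : Type*} (l : Filter ι) [l.NeBot] (h : ι → C)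
    (hpos : ∀ i, 0 ≤ h i) (hle : ∀ i, ‖h i‖ ≤ 1)
    (happrox_left : ∀ c : C, Tendsto (fun i => CFC.sqrt (h i) * c) l (𝓝 c))
    (happrox_right : ∀ c : C, Tendsto (fun i => c * CFC.sqrt (h i)) l (𝓝 c))
    (y : C) (hy : IsSelfAdjoint y) (lam : ℝ) (hlam : specMax y ≤ lam)
    (ε : ℝ) (hε : 0 < ε) :
    ∃ i, specMax (y - (lam : ℂ) • h i) ≤ ε := by
  set s : ι → C := fun i => CFC.sqrt (h i) with hs
  have hs_nonneg : ∀ i, 0 ≤ s i := fun i => CFC.sqrt_nonneg (h i)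
  have hs_sa : ∀ i, IsSelfAdjoint (s i) := fun i => .of_nonneg (hs_nonneg i)
  have hs_mul : ∀ i, s i * s i = h i := fun i => CFC.sqrt_mul_sqrt_self (h i) (hpos i)
  have hs_norm : ∀ i, ‖s i‖ ≤ 1 := by
    intro i
    have h2 : ‖s i‖ * ‖s i‖ = ‖h i‖ := by
      rw [← CStarRing.norm_star_mul_self, (hs_sa i).star_eq, hs_mul i]
    nlinarith [norm_nonneg (s i), hle i]
  -- the norms tend to zero
  have htend : Tendsto (fun i => ‖s i * y * s i - y‖) l (𝓝 0) := by
    have h1 : Tendsto (fun i => ‖y * s i - y‖) l (𝓝 0) := by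
      have := (happrox_right y).sub (tendsto_const_nhds (x := y))
      simpa [Function.comp_def] using (tendsto_norm_zero.comp (by simpa using this))
    have h2 : Tendsto (fun i => ‖s i * y - y‖) l (𝓝 0) := by
      have := (happrox_left y).sub (tendsto_const_nhds (x := y))
      simpa [Function.comp_def] using (tendsto_norm_zero.comp (by simpa using this))
    have hbound : ∀ i, ‖s i * y * s i - y‖ ≤ ‖y * s i - y‖ + ‖s i * y - y‖ := by
      intro i
      have key : s i * y * s i - y = s i * (y * s i - y) + (s i * y - y) := by noncomm_ring
      calc ‖s i * y * s i - y‖ ≤ ‖s i * (y * s i - y)‖ + ‖s i * y - y‖ := by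
            rw [key]; exact norm_add_le _ _
        _ ≤ ‖s i‖ * ‖y * s i - y‖ + ‖s i * y - y‖ := by
            gcongr; exact norm_mul_le _ _
        _ ≤ 1 * ‖y * s i - y‖ + ‖s i * y - y‖ := by gcongr; exact hs_norm i
        _ = ‖y * s i - y‖ + ‖s i * y - y‖ := by ring
    simpa using squeeze_zero (fun i => norm_nonneg _) hbound (by simpa using h1.add h2)
  obtain ⟨i, hi⟩ := (htend.eventually (gt_mem_nhds hε)).exists
  refine ⟨i, ?_⟩
  -- work in the unitization
  set A := Unitization ℂ C
  set Y : A := (y : A)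
  set S : A := (s i : A)
  set H : A := (h i : A)
  have hY_sa : IsSelfAdjoint Y := by
    rw [Unitization.isSelfAdjoint_inr (R := ℂ)]; exact hy
  have hS_sa : IsSelfAdjoint S := by
    rw [Unitization.isSelfAdjoint_inr (R := ℂ)]; exact hs_sa i
  -- y ≤ lam • 1 in the unitization
  have hY_le : Y ≤ algebraMap ℝ A lam := by
    refine le_algebraMap_of_spectrum_le (fun r hr => ?_) hY_sa
    have hbdd : BddAbove (spectrum ℝ Y) := (spectrum.isCompact Y).bddAbove
    exact (le_csSup hbdd hr).trans hlam
  -- conjugation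
  have hconj : S * Y * S ≤ lam • H := by
    have h0 : 0 ≤ star S * (algebraMap ℝ A lam - Y) * S :=
      star_left_conjugate_nonneg (by rwa [sub_nonneg]) S
    rw [hS_sa.star_eq] at h0
    have heq : S * (algebraMap ℝ A lam - Y) * S = lam • H - S * Y * S := by
      have hSS : S * S = H := by
        rw [show S * S = ((s i * s i : C) : A) from (Unitization.inr_mul ℂ _ _).symm, hs_mul i]
      rw [Algebra.algebraMap_eq_smul_one]
      rw [mul_sub, sub_mul, hSS.symm]
      simp [mul_smul_comm, smul_mul_assoc, mul_assoc]
    rw [heq] at h0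
    rwa [sub_nonneg] at h0
  -- the self-adjoint error term
  have herr : Y - S * Y * S ≤ algebraMap ℝ A ‖s i * y * s i - y‖ := by
    have hcast : Y - S * Y * S = ((y - s i * y * s i : C) : A) := by
      rw [Unitization.inr_sub, Unitization.inr_mul, Unitization.inr_mul]
    have hsa : IsSelfAdjoint (Y - S * Y * S) := by
      have : IsSelfAdjoint (S * Y * S) := by
        rw [IsSelfAdjoint, star_mul, star_mul, hS_sa.star_eq, hY_sa.star_eq, mul_assoc]
      exact hY_sa.sub this
    have := IsSelfAdjoint.le_algebraMap_norm_self hsa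
    rwa [show ‖Y - S * Y * S‖ = ‖s i * y * s i - y‖ by
      rw [hcast, Unitization.norm_inr, norm_sub_rev]] at this
  -- combine
  have hkey : ((y - (lam : ℂ) • h i : C) : A) ≤ algebraMap ℝ A ‖s i * y * s i - y‖ := by
    have hcast : ((y - (lam : ℂ) • h i : C) : A) = Y - lam • H := by
      rw [Unitization.inr_sub, Unitization.inr_smul, Complex.coe_smul]
    rw [hcast]
    calc Y - lam • H = (S * Y * S - lam • H) + (Y - S * Y * S) := by abel
      _ ≤ 0 + (Y - S * Y * S) := by
          gcongr
          rwa [sub_nonpos]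
      _ = Y - S * Y * S := by rw [zero_add]
      _ ≤ algebraMap ℝ A ‖s i * y * s i - y‖ := herr
  -- conclude on the spectrum
  have hsa' : IsSelfAdjoint ((y - (lam : ℂ) • h i : C) : A) := by
    rw [Unitization.isSelfAdjoint_inr (R := ℂ)]
    refine hy.sub ?_
    rw [IsSelfAdjoint, star_smul, (IsSelfAdjoint.of_nonneg (hpos i)).star_eq]
    norm_num
  have hspec := (le_algebraMap_iff_spectrum_le (a := ((y - (lam : ℂ) • h i : C) : A)) hsa').mp hkey
  refine csSup_le ?_ (fun x hx => (hspec x hx).trans hi.le)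
  exact hsa'.spectrum_nonempty
end

section
/- Let A be a Z*-algebra and K a compact subset of A (in the norm topology). Then there exists a nonzero positive element x ∈ A such that x·k = k·x = 0 for all k ∈ K. -/
/-- If `A` is a Z*-algebra and `K ⊆ A` is compact, then some nonzero positive `x`
annihilates `K` on both sides. -/
theorem stmt_12 {A : Type*} [NonUnitalCStarAlgebra A] [PartialOrder A] [StarOrderedRing A]
    (hA : ∀ a : A, 0 ≤ a → ∃ x : A, x ≠ 0 ∧ a * x = 0)
    (K : Set A) (hK : IsCompact K) :
    ∃ x : A, 0 ≤ x ∧ x ≠ 0 ∧ ∀ k ∈ K, x * k = 0 ∧ k * x = 0 := by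
  -- K is separable: get a countable set c with K ⊆ closure c
  obtain ⟨c, hc_count, hc_sub⟩ := hK.isSeparable
  rcases c.eq_empty_or_nonempty with rfl | hc_ne
  · -- K is empty
    obtain ⟨x, hx, -⟩ := hA 0 le_rfl
    refine ⟨x * star x, mul_star_self_nonneg x, ?_, fun k hk => ?_⟩
    · simpa using (CStarRing.mul_star_self_eq_zero_iff x).not.mpr hx
    · exact absurd (hc_sub hk) (by simp)
  · obtain ⟨u, rfl⟩ := hc_count.exists_eq_range hc_ne
    -- scaled sequence
    set r : ℕ → ℝ := fun n => Real.sqrt ((1/2 : ℝ)^n / (1 + ‖u n‖^2)) with hr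
    have hr_pos : ∀ n, 0 < r n := fun n => Real.sqrt_pos.mpr <| by positivity
    set v : ℕ → A := fun n => r n • u n with hv
    set f : ℕ → A := fun n => star (v n) * v n + v n * star (v n) with hf
    have hv_sq : ∀ n, ‖v n‖ * ‖v n‖ ≤ (1/2 : ℝ)^n := by
      intro n
      have h1 : ‖v n‖ = r n * ‖u n‖ := by
        rw [hv, norm_smul, Real.norm_eq_abs, abs_of_pos (hr_pos n)]
      have h2 : r n * r n = (1/2 : ℝ)^n / (1 + ‖u n‖^2) :=
        Real.mul_self_sqrt (by positivity)
      rw [h1]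
      calc r n * ‖u n‖ * (r n * ‖u n‖) = (r n * r n) * (‖u n‖ * ‖u n‖) := by ring
        _ = (1/2 : ℝ)^n / (1 + ‖u n‖^2) * (‖u n‖ * ‖u n‖) := by rw [h2]
        _ ≤ (1/2 : ℝ)^n := by
            rw [div_mul_eq_mul_div, div_le_iff₀ (by positivity)]
            nlinarith [norm_nonneg (u n), pow_pos (by norm_num : (0:ℝ) < 1/2) n]
    have hf_nonneg : ∀ n, 0 ≤ f n :=
      fun n => add_nonneg (star_mul_self_nonneg (v n)) (mul_star_self_nonneg (v n))
    have hf_sum : Summable f := by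
      apply Summable.of_norm_bounded (g := fun n => 2 * (1/2 : ℝ)^n)
        (summable_geometric_two.mul_left 2)
      intro n
      calc ‖f n‖ ≤ ‖star (v n) * v n‖ + ‖v n * star (v n)‖ := norm_add_le _ _
        _ = ‖v n‖ * ‖v n‖ + ‖v n‖ * ‖v n‖ := by
            rw [CStarRing.norm_star_mul_self, CStarRing.norm_self_mul_star]
        _ ≤ 2 * (1/2 : ℝ)^n := by linarith [hv_sq n]
    set a : A := ∑' n, f n with ha
    have ha_nonneg : 0 ≤ a := tsum_nonneg hf_nonneg
    obtain ⟨x, hx_ne, hax⟩ := hA a ha_nonneg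
    -- conjugate by x
    set L : A →L[ℂ] A :=
      (ContinuousLinearMap.mul ℂ A (star x)).comp ((ContinuousLinearMap.mul ℂ A).flip x)
      with hL
    have hL_apply : ∀ y : A, L y = star x * y * x := fun y => by
      simp [hL, mul_assoc]
    have hg_sum : Summable (fun n => star x * f n * x) := by
      have h := hf_sum.map L.toLinearMap.toAddMonoidHom L.continuous
      have : (⇑L ∘ f) = fun n => star x * f n * x := by
        funext n; exact hL_apply (f n)
      rwa [show ⇑L.toLinearMap.toAddMonoidHom ∘ f = ⇑L ∘ f from rfl, this] at h
    have hsum2 : (∑' n, star x * f n * x) = 0 := by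
      calc (∑' n, star x * f n * x) = ∑' n, L (f n) := by
            simp only [hL_apply]
        _ = L a := (L.map_tsum hf_sum).symm
        _ = 0 := by rw [hL_apply, mul_assoc, hax, mul_zero]
    have hg_nonneg : ∀ n, 0 ≤ star x * f n * x :=
      fun n => star_left_conjugate_nonneg (hf_nonneg n) x
    have hterm : ∀ n, star x * f n * x = 0 := by
      intro n
      have h1 : star x * f n * x ≤ 0 := hsum2 ▸ Summable.le_tsum hg_sum n fun j _ => hg_nonneg j
      exact le_antisymm h1 (hg_nonneg n)
    -- split the two positive pieces
    have hvx : ∀ n, v n * x = 0 ∧ star (v n) * x = 0 := by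
      intro n
      have hsplit : star (v n * x) * (v n * x) + star (star (v n) * x) * (star (v n) * x)
          = 0 := by
        have := hterm n
        rw [hf] at this
        calc star (v n * x) * (v n * x) + star (star (v n) * x) * (star (v n) * x)
            = star x * (star (v n) * v n + v n * star (v n)) * x := by
              simp only [star_mul, star_star]
              noncomm_ring
          _ = 0 := this
      have h0 := (add_eq_zero_iff_of_nonneg (star_mul_self_nonneg _)
        (star_mul_self_nonneg _)).mp hsplit
      exact ⟨(CStarRing.star_mul_self_eq_zero_iff _).mp h0.1,
        (CStarRing.star_mul_self_eq_zero_iff _).mp h0.2⟩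
    have hux : ∀ n, u n * x = 0 ∧ star x * u n = 0 := by
      intro n
      have h1 : v n * x = r n • (u n * x) := by rw [hv]; simp [smul_mul_assoc]
      have h2 : star x * v n = r n • (star x * u n) := by
        rw [hv]; simp [mul_smul_comm]
      have hvx2 : star x * v n = 0 := by
        have := congrArg star (hvx n).2
        simpa [star_mul, star_star] using this
      constructor
      · have := (hvx n).1
        rw [h1] at this
        exact (smul_eq_zero.mp this).resolve_left (by
          exact_mod_cast (hr_pos n).ne')
      · rw [h1] at *
        have := hvx2
        rw [h2] at this
        exact (smul_eq_zero.mp this).resolve_left (by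
          exact_mod_cast (hr_pos n).ne')
    -- extend by continuity to all of K
    have hclosed : IsClosed {k : A | k * x = 0 ∧ star x * k = 0} := by
      apply IsClosed.inter
      · exact isClosed_eq (by fun_prop) continuous_const
      · exact isClosed_eq (by fun_prop) continuous_const
    have hK_ann : ∀ k ∈ K, k * x = 0 ∧ star x * k = 0 := by
      intro k hk
      have hsub : Set.range u ⊆ {k : A | k * x = 0 ∧ star x * k = 0} := by
        rintro - ⟨n, rfl⟩; exact hux n
      exact (hclosed.closure_subset_iff.mpr hsub) (hc_sub hk)
    refine ⟨x * star x, mul_star_self_nonneg x, ?_, fun k hk => ⟨?_, ?_⟩⟩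
    · simpa using (CStarRing.mul_star_self_eq_zero_iff x).not.mpr hx_ne
    · rw [mul_assoc, (hK_ann k hk).2, mul_zero]
    · rw [← mul_assoc, (hK_ann k hk).1, zero_mul]
end

section
/- Let (aₙ) be a sequence of positive elements of a C*-algebra A that converges to 0 in norm. Then there exist a sequence (bₙ) of nonnegative real numbers converging to 0 and a sequence (cₖ) of positive elements of A converging to 0 such that a_{n+k} ≤ bₙ · cₖ for all n, k. -/
open Filter Topology NNReal

section Aux

variable {A : Type*} [NonUnitalCStarAlgebra A] [PartialOrder A] [StarOrderedRing A]

private lemma my_smul_nonneg (r : ℝ) (hr : 0 ≤ r) (x : A) (hx : 0 ≤ x) : 0 ≤ r • x := by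
  have h := CFC.sqrt_mul_sqrt_self x hx
  have hsa : star (CFC.sqrt x) = CFC.sqrt x := (IsSelfAdjoint.of_nonneg (CFC.sqrt_nonneg x))
  calc (0:A) ≤ star (Real.sqrt r • CFC.sqrt x) * (Real.sqrt r • CFC.sqrt x) :=
        star_mul_self_nonneg _
    _ = r • x := by
        rw [star_smul, star_trivial, hsa, smul_mul_smul_comm, h, Real.mul_self_sqrt hr]

private lemma my_smul_le_smul (r : ℝ) (hr : 0 ≤ r) {x y : A} (hx : x ≤ y) : r • x ≤ r • y := by
  rw [← sub_nonneg, ← smul_sub]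
  exact my_smul_nonneg r hr _ (sub_nonneg.mpr hx)

private lemma my_smul_le_smul_right {r r' : ℝ} (h : r ≤ r') {x : A} (hx : 0 ≤ x) :
    r • x ≤ r' • x := by
  rw [← sub_nonneg, ← sub_smul]
  exact my_smul_nonneg _ (by linarith) _ hx

private lemma my_nnsmul_nonneg (r : ℝ≥0) (x : A) (hx : 0 ≤ x) : 0 ≤ r • x := by
  rw [NNReal.smul_def]; exact my_smul_nonneg _ r.2 _ hx

end Aux

section Gel

noncomputable def gfun (τ : ℝ≥0) : ℝ≥0 → ℝ≥0 := fun u => u * (τ + u)⁻¹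

lemma gfun_cont {τ : ℝ≥0} (hτ : 0 < τ) : Continuous (gfun τ) := by
  unfold gfun; fun_prop (disch := intro u; positivity)

lemma gfun_zero (τ : ℝ≥0) : gfun τ 0 = 0 := by simp [gfun]

lemma gfun_le_one (τ : ℝ≥0) (u : ℝ≥0) : gfun τ u ≤ 1 := by
  unfold gfun
  rcases eq_or_ne (τ + u) 0 with h | h
  · simp [h]
  · rw [← mul_inv_cancel₀ h]; gcongr; exact le_add_self

variable {A : Type*} [NonUnitalCStarAlgebra A] [PartialOrder A] [StarOrderedRing A]

noncomputable def Gel (τ : ℝ≥0) (x : A) : A := cfcₙ (gfun τ) x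

lemma Gel_nonneg (τ : ℝ≥0) (x : A) : 0 ≤ Gel τ x := cfcₙ_nonneg fun u _ => zero_le

lemma Gel_nnnorm (τ : ℝ≥0) (x : A) : ‖Gel τ x‖₊ ≤ 1 :=
  nnnorm_cfcₙ_nnreal_le fun u _ => gfun_le_one τ u

lemma Gel_norm (τ : ℝ≥0) (x : A) : ‖Gel τ x‖ ≤ 1 := by
  exact_mod_cast Gel_nnnorm τ x

lemma Gel_anti {τ τ' : ℝ≥0} (hτ' : 0 < τ') (h : τ' ≤ τ) (x : A) : Gel τ x ≤ Gel τ' x := by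
  refine cfcₙ_mono (fun u _ => ?_) ((gfun_cont (hτ'.trans_le h)).continuousOn)
    ((gfun_cont hτ').continuousOn) (gfun_zero _) (gfun_zero _)
  exact mul_le_mul_right (inv_anti₀ (by positivity) (add_le_add_left h u)) u

lemma Gel_eq {τ : ℝ≥0} (hτ : 0 < τ) (x : A) (hx : 0 ≤ x) :
    Gel τ x = cfcₙ (fun u : ℝ≥0 => 1 - (1 + u)⁻¹) (τ⁻¹ • x) := by
  have hcont : ContinuousOn (fun u : ℝ≥0 => 1 - (1+u)⁻¹) ((τ⁻¹ • ·) '' quasispectrum ℝ≥0 x) := by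
    fun_prop (disch := intro _ _; positivity)
  rw [← cfcₙ_comp_smul τ⁻¹ _ x hcont (by simp) hx]
  refine cfcₙ_congr fun u _ => ?_
  show gfun τ u = 1 - (1 + τ⁻¹ • u)⁻¹
  rw [smul_eq_mul]
  have h1 : (1 : ℝ≥0) + τ⁻¹ * u = τ⁻¹ * (τ + u) := by
    rw [mul_add, inv_mul_cancel₀ hτ.ne']
  have h2 : τ + u ≠ 0 := by positivity
  rw [h1, mul_inv, inv_inv]
  rw [eq_tsub_iff_add_eq_of_le]
  · rw [gfun, ← add_mul, add_comm u τ, mul_inv_cancel₀ h2]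
  · calc τ * (τ+u)⁻¹ ≤ (τ+u) * (τ+u)⁻¹ := by gcongr; exact le_self_add
      _ = 1 := mul_inv_cancel₀ h2

lemma Gel_mono {τ : ℝ≥0} (hτ : 0 < τ) {x y : A} (hx : 0 ≤ x) (hy : 0 ≤ y) (hxy : x ≤ y) :
    Gel τ x ≤ Gel τ y := by
  rw [Gel_eq hτ x hx, Gel_eq hτ y hy]
  refine CFC.monotoneOn_one_sub_one_add_inv ?_ ?_ ?_
  · exact Set.mem_Ici.mpr (my_nnsmul_nonneg _ _ hx)
  · exact Set.mem_Ici.mpr (my_nnsmul_nonneg _ _ hy)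
  · rw [NNReal.smul_def, NNReal.smul_def]
    exact my_smul_le_smul _ (by positivity) hxy

lemma Gel_scale {τ : ℝ≥0} (hτ : 0 < τ) {r : ℝ≥0} (hr : 0 < r) (x : A) (hx : 0 ≤ x) :
    Gel τ (r • x) = Gel (τ / r) x := by
  unfold Gel
  have hcont : ContinuousOn (gfun τ) ((r • ·) '' quasispectrum ℝ≥0 x) :=
    (gfun_cont hτ).continuousOn
  rw [← cfcₙ_comp_smul r _ x hcont (gfun_zero τ) hx]
  refine cfcₙ_congr fun u _ => ?_
  show gfun τ (r • u) = gfun (τ / r) u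
  rw [smul_eq_mul]
  unfold gfun
  rw [div_add' _ _ _ hr.ne', mul_comm u r, inv_div, div_eq_mul_inv]
  ring

lemma quasispectrum_le_nnnorm (x : A) (hx : 0 ≤ x) {u : ℝ≥0} (hu : u ∈ quasispectrum ℝ≥0 x) :
    u ≤ ‖x‖₊ := by
  have h := apply_le_nnnorm_cfcₙ_nnreal (id) x hu (by fun_prop) rfl hx
  rwa [cfcₙ_id ℝ≥0 x hx] at h

lemma le_Gel_one {x : A} (hx : 0 ≤ x) (hx1 : ‖x‖₊ ≤ 1) : x ≤ (2 : ℝ≥0) • Gel 1 x := by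
  unfold Gel
  rw [← cfcₙ_smul 2 (gfun 1) x ((gfun_cont one_pos).continuousOn) (by simp [gfun_zero])]
  nth_rewrite 1 [← cfcₙ_id ℝ≥0 x hx]
  refine cfcₙ_mono (fun u hu => ?_) (by fun_prop) ?_ rfl (by simp [gfun_zero])
  · have hu1 : u ≤ 1 := (quasispectrum_le_nnnorm x hx hu).trans hx1
    show u ≤ 2 • gfun 1 u
    rw [smul_eq_mul]
    unfold gfun
    have h2 : (1 : ℝ≥0) + u ≠ 0 := by positivity
    calc u = (u * (1 + u)) * (1 + u)⁻¹ := by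
          rw [mul_assoc, mul_inv_cancel₀ h2, mul_one]
      _ ≤ (2 * u) * (1 + u)⁻¹ := by
          refine mul_le_mul_left ?_ _
          rw [mul_add, mul_one, two_mul]
          exact add_le_add_right (mul_le_of_le_one_right (zero_le (a := u)) hu1) u
      _ = 2 * (u * (1 + u)⁻¹) := by ring
  · exact (continuous_const.mul (gfun_cont one_pos)).continuousOn

end Gel

section Main

variable {A : Type*} [NonUnitalCStarAlgebra A] [PartialOrder A] [StarOrderedRing A]

lemma aux_main (a : ℕ → A) (ha : ∀ n, 0 ≤ a n) (s : ℕ → ℝ) (hs_pos : ∀ n, 0 < s n)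
    (hs_anti : Antitone s) (hs_bound : ∀ n m, n ≤ m → ‖a m‖ ≤ s n)
    (hs_lim : Tendsto s atTop (𝓝 0)) :
    ∃ (b : ℕ → ℝ) (c : ℕ → A), (∀ n, 0 ≤ b n) ∧ (∀ k, 0 ≤ c k) ∧
      Tendsto b atTop (𝓝 0) ∧ Tendsto c atTop (𝓝 0) ∧
      ∀ n k, a (n + k) ≤ (b n : ℂ) • c k := by
  classical
  -- normalized elements
  set e : ℕ → A := fun m => (s m)⁻¹ • a m with he
  have he_nonneg : ∀ m, 0 ≤ e m := fun m =>
    my_smul_nonneg _ (inv_nonneg.mpr (hs_pos m).le) _ (ha m)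
  have he_norm : ∀ m, ‖e m‖ ≤ 1 := by
    intro m
    rw [he]
    simp only
    rw [norm_smul, Real.norm_eq_abs, abs_of_nonneg (inv_nonneg.mpr (hs_pos m).le)]
    calc (s m)⁻¹ * ‖a m‖ ≤ (s m)⁻¹ * s m :=
          mul_le_mul_of_nonneg_left (hs_bound m m le_rfl) (inv_nonneg.mpr (hs_pos m).le)
      _ = 1 := inv_mul_cancel₀ (hs_pos m).ne'
  have he_nnnorm : ∀ m, ‖e m‖₊ ≤ 1 := fun m => by exact_mod_cast he_norm m
  have ha_eq : ∀ m, a m = s m • e m := fun m => by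
    rw [he]; simp only; rw [smul_inv_smul₀ (hs_pos m).ne']
  -- z
  have hz_summable : ∀ k, Summable fun n => ((2:ℝ)⁻¹ ^ n) • e (n + k) := by
    intro k
    refine Summable.of_norm_bounded
      (summable_geometric_of_lt_one (r := (2⁻¹:ℝ)) (by norm_num) (by norm_num)) fun n => ?_
    rw [norm_smul, Real.norm_eq_abs, abs_of_nonneg (by positivity)]
    calc (2⁻¹:ℝ)^n * ‖e (n+k)‖ ≤ (2⁻¹:ℝ)^n * 1 :=
          mul_le_mul_of_nonneg_left (he_norm _) (by positivity)
      _ = (2⁻¹:ℝ)^n := mul_one _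
  set z : ℕ → A := fun k => ∑' n, ((2:ℝ)⁻¹ ^ n) • e (n + k) with hz
  have hz_nonneg : ∀ k, 0 ≤ z k := fun k =>
    tsum_nonneg fun n => my_smul_nonneg _ (by positivity) _ (he_nonneg _)
  have hz_term : ∀ k n, ((2:ℝ)⁻¹ ^ n) • e (n + k) ≤ z k := fun k n =>
    Summable.le_tsum (hz_summable k) n fun m _ => my_smul_nonneg _ (by positivity) _ (he_nonneg _)
  -- block structure
  have hMex : ∀ j : ℕ, ∃ N, ∀ n ≥ N, s n ≤ (16:ℝ)⁻¹ ^ j := by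
    intro j
    obtain ⟨N, hN⟩ := (Metric.tendsto_atTop.mp hs_lim) ((16:ℝ)⁻¹ ^ j) (by positivity)
    refine ⟨N, fun n hn => ?_⟩
    have := hN n hn
    rw [Real.dist_eq, sub_zero, abs_of_nonneg (hs_pos n).le] at this
    exact this.le
  choose M hM using hMex
  set R : ℕ → ℕ := fun J => J + ∑ i ∈ Finset.range (J + 1), M i with hR
  have hR1 : ∀ J, J ≤ R J := fun J => Nat.le_add_right _ _
  have hR2 : ∀ J i, i ≤ J → M i ≤ R J := by
    intro J i hi
    calc M i ≤ ∑ i ∈ Finset.range (J+1), M i :=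
          Finset.single_le_sum (fun _ _ => Nat.zero_le _)
            (Finset.mem_range.mpr (Nat.lt_succ_of_le hi))
      _ ≤ R J := Nat.le_add_left _ _
  set jn : ℕ → ℕ := fun n => Nat.findGreatest (fun j => ∀ i, i ≤ j → M i ≤ n) n with hjn
  have key1 : ∀ J n, R J ≤ n → J ≤ jn n := fun J n h =>
    Nat.le_findGreatest ((hR1 J).trans h) (fun i hi => (hR2 J i hi).trans h)
  have key2 : ∀ n, n ≤ R (jn n + 1) := by
    intro n
    by_contra hcon
    push_neg at hcon
    exact Nat.not_succ_le_self (jn n) (key1 (jn n + 1) n hcon.le)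
  have key3 : ∀ J n, R J ≤ n → s n ≤ (16:ℝ)⁻¹ ^ (jn n) := by
    intro J n h
    have hp : ∀ i, i ≤ jn n → M i ≤ n :=
      Nat.findGreatest_spec (P := fun j => ∀ i, i ≤ j → M i ≤ n) (m := J) (n := n)
        ((hR1 J).trans h) (fun i hi => (hR2 J i hi).trans h)
    exact hM (jn n) n (hp (jn n) le_rfl)
  -- τ
  set τ : ℕ → ℝ≥0 := fun j => (2:ℝ≥0)⁻¹ ^ (R (j + 1)) with hτdef
  have hτ_pos : ∀ j, 0 < τ j := fun j => by
    rw [hτdef]; positivity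
  -- y and c
  have hy_summable : ∀ k, Summable fun j => ((2:ℝ)⁻¹ ^ j) • Gel (τ j) (z k) := by
    intro k
    refine Summable.of_norm_bounded
      (summable_geometric_of_lt_one (r := (2⁻¹:ℝ)) (by norm_num) (by norm_num)) fun j => ?_
    rw [norm_smul, Real.norm_eq_abs, abs_of_nonneg (by positivity)]
    calc (2⁻¹:ℝ)^j * ‖Gel (τ j) (z k)‖ ≤ (2⁻¹:ℝ)^j * 1 :=
          mul_le_mul_of_nonneg_left (Gel_norm _ _) (by positivity)
      _ = (2⁻¹:ℝ)^j := mul_one _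
  set y : ℕ → A := fun k => ∑' j, ((2:ℝ)⁻¹ ^ j) • Gel (τ j) (z k) with hy
  have hy_nonneg : ∀ k, 0 ≤ y k := fun k =>
    tsum_nonneg fun j => my_smul_nonneg _ (by positivity) _ (Gel_nonneg _ _)
  have hy_term : ∀ k j, ((2:ℝ)⁻¹ ^ j) • Gel (τ j) (z k) ≤ y k := fun k j =>
    Summable.le_tsum (hy_summable k) j fun m _ => my_smul_nonneg _ (by positivity) _ (Gel_nonneg _ _)
  have hgeom : HasSum (fun j : ℕ => (2⁻¹:ℝ)^j) 2 := by
    have h := hasSum_geometric_of_lt_one (r := (2⁻¹:ℝ)) (by norm_num) (by norm_num)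
    have h2 : ((1:ℝ) - 2⁻¹)⁻¹ = 2 := by norm_num
    rwa [h2] at h
  have hy_norm : ∀ k, ‖y k‖ ≤ 2 := by
    intro k
    refine tsum_of_norm_bounded hgeom fun j => ?_
    rw [norm_smul, Real.norm_eq_abs, abs_of_nonneg (by positivity)]
    calc (2⁻¹:ℝ)^j * ‖Gel (τ j) (z k)‖ ≤ (2⁻¹:ℝ)^j * 1 :=
          mul_le_mul_of_nonneg_left (Gel_norm _ _) (by positivity)
      _ = (2⁻¹:ℝ)^j := mul_one _
  set c : ℕ → A := fun k => Real.sqrt (s k) • y k with hc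
  set b : ℕ → ℝ := fun n => 2 * Real.sqrt (s n) * 2 ^ (jn n) with hb
  have hb_nonneg : ∀ n, 0 ≤ b n := fun n => by rw [hb]; positivity
  have hc_nonneg : ∀ k, 0 ≤ c k := fun k =>
    my_smul_nonneg _ (Real.sqrt_nonneg _) _ (hy_nonneg k)
  -- b tends to zero
  have hjn_tendsto : Tendsto jn atTop atTop := by
    refine Filter.tendsto_atTop.mpr fun J => Filter.eventually_atTop.mpr ⟨R J, fun n hn => ?_⟩
    exact key1 J n hn
  have hb_lim : Tendsto b atTop (𝓝 0) := by
    have hsqrt16 : ∀ j : ℕ, Real.sqrt ((16:ℝ)⁻¹ ^ j) = (4⁻¹:ℝ)^j := by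
      intro j
      have hh : (((4:ℝ)⁻¹)^j)^2 = ((16:ℝ)⁻¹)^j := by
        rw [← pow_mul, Nat.mul_comm, pow_mul]
        norm_num
      rw [← hh, Real.sqrt_sq (by positivity)]
    refine squeeze_zero' (g := fun n => 2 * (2⁻¹:ℝ)^(jn n)) (Filter.Eventually.of_forall hb_nonneg) ?_ ?_
    · refine Filter.eventually_atTop.mpr ⟨R 0, fun n hn => ?_⟩
      rw [hb]
      simp only
      calc 2 * Real.sqrt (s n) * 2 ^ (jn n)
            ≤ 2 * ((4⁻¹:ℝ)^(jn n)) * 2 ^ (jn n) := by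
              gcongr
              rw [← hsqrt16 (jn n)]
              exact Real.sqrt_le_sqrt (key3 0 n hn)
        _ = 2 * (2⁻¹:ℝ)^(jn n) := by
              rw [mul_assoc, ← mul_pow]; norm_num
    · have h1 : Tendsto (fun j : ℕ => 2 * (2⁻¹:ℝ)^j) atTop (𝓝 0) := by
        have := (tendsto_pow_atTop_nhds_zero_of_lt_one
          (by norm_num : (0:ℝ) ≤ 2⁻¹) (by norm_num)).const_mul (2:ℝ)
        simpa using this
      exact h1.comp hjn_tendsto
  -- c tends to zero
  have hc_lim : Tendsto c atTop (𝓝 0) := by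
    refine squeeze_zero_norm (a := fun k => 2 * Real.sqrt (s k)) (fun k => ?_) ?_
    · show ‖c k‖ ≤ 2 * Real.sqrt (s k)
      rw [hc]
      simp only
      rw [norm_smul, Real.norm_eq_abs, abs_of_nonneg (Real.sqrt_nonneg _)]
      calc Real.sqrt (s k) * ‖y k‖ ≤ Real.sqrt (s k) * 2 := by gcongr; exact hy_norm k
        _ = 2 * Real.sqrt (s k) := mul_comm _ _
    · have : Tendsto (fun k => Real.sqrt (s k)) atTop (𝓝 0) := by
        have := hs_lim.sqrt
        simpa using this
      simpa using this.const_mul (2:ℝ)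
  refine ⟨b, c, hb_nonneg, hc_nonneg, hb_lim, hc_lim, ?_⟩
  intro n k
  have hcast : ((b n : ℂ)) • c k = b n • c k := by
    rw [← algebraMap_smul ℂ (b n) (c k)]
    norm_cast
  rw [hcast]
  -- step 1
  have step1 : e (n+k) ≤ ((2:ℝ)^n) • z k := by
    have h := my_smul_le_smul ((2:ℝ)^n) (by positivity) (hz_term k n)
    rwa [smul_smul, ← mul_pow, mul_inv_cancel₀ two_ne_zero, one_pow, one_smul] at h
  have step2 : e (n+k) ≤ ((2:ℝ≥0)^n) • z k := by
    rw [NNReal.smul_def]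
    push_cast
    exact step1
  have step3 : Gel 1 (e (n+k)) ≤ Gel ((2:ℝ≥0)⁻¹^n) (z k) := by
    have hm := Gel_mono one_pos (he_nonneg _) (my_nnsmul_nonneg _ _ (hz_nonneg k)) step2
    rwa [Gel_scale one_pos (pow_pos two_pos n) (z k) (hz_nonneg k), one_div, ← inv_pow] at hm
  have hτ_le : τ (jn n) ≤ (2:ℝ≥0)⁻¹ ^ n := by
    rw [hτdef]
    exact pow_le_pow_of_le_one zero_le (by norm_num) (key2 n)
  have step4 : Gel ((2:ℝ≥0)⁻¹^n) (z k) ≤ Gel (τ (jn n)) (z k) :=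
    Gel_anti (hτ_pos (jn n)) hτ_le (z k)
  have step5 : e (n+k) ≤ (2:ℝ) • Gel (τ (jn n)) (z k) := by
    have h1 := le_Gel_one (he_nonneg (n+k)) (he_nnnorm (n+k))
    rw [NNReal.smul_def] at h1
    norm_num at h1
    exact h1.trans (my_smul_le_smul 2 (by norm_num) (step3.trans step4))
  have step6 : a (n+k) ≤ (s (n+k) * 2) • Gel (τ (jn n)) (z k) := by
    rw [ha_eq (n+k)]
    exact (my_smul_le_smul (s (n+k)) (hs_pos _).le step5).trans_eq (smul_smul _ _ _)
  have step7 : Gel (τ (jn n)) (z k) ≤ ((2:ℝ)^(jn n)) • y k := by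
    have h := my_smul_le_smul ((2:ℝ)^(jn n)) (by positivity) (hy_term k (jn n))
    rwa [smul_smul, ← mul_pow, mul_inv_cancel₀ two_ne_zero, one_pow, one_smul] at h
  have step8 : a (n+k) ≤ (s (n+k) * 2 * 2^(jn n)) • y k := by
    refine step6.trans ?_
    have hpos : (0:ℝ) ≤ s (n+k) * 2 := by have := hs_pos (n+k); positivity
    exact (my_smul_le_smul (s (n+k) * 2) hpos step7).trans_eq (smul_smul _ _ _)
  have hsk_pos : (0:ℝ) < Real.sqrt (s k) := Real.sqrt_pos.mpr (hs_pos k)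
  have step9 : y k = (Real.sqrt (s k))⁻¹ • c k := by
    rw [hc]
    simp only
    rw [smul_smul, inv_mul_cancel₀ hsk_pos.ne', one_smul]
  rw [step9, smul_smul] at step8
  refine step8.trans (my_smul_le_smul_right ?_ (hc_nonneg k))
  -- coefficient inequality
  have hsnk : s (n+k) ≤ Real.sqrt (s n) * Real.sqrt (s k) := by
    nth_rewrite 1 [← Real.mul_self_sqrt (hs_pos (n+k)).le]
    exact mul_le_mul (Real.sqrt_le_sqrt (hs_anti (Nat.le_add_right n k)))
      (Real.sqrt_le_sqrt (hs_anti (Nat.le_add_left k n)))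
      (Real.sqrt_nonneg _) (Real.sqrt_nonneg _)
  calc s (n+k) * 2 * 2^(jn n) * (Real.sqrt (s k))⁻¹
      ≤ (Real.sqrt (s n) * Real.sqrt (s k)) * 2 * 2^(jn n) * (Real.sqrt (s k))⁻¹ := by
        gcongr
    _ = b n := by
        rw [hb]
        field_simp

end Main

/-- If `(aₙ)` is a sequence of positive elements of a C*-algebra converging to `0`, then
there are a null sequence `(bₙ)` of nonnegative reals and a null sequence `(cₖ)` of
positive elements with `a_{n+k} ≤ bₙ • cₖ` for all `n, k`. -/
theorem stmt_13 {A : Type*} [NonUnitalCStarAlgebra A] [PartialOrder A] [StarOrderedRing A]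
    (a : ℕ → A) (ha : ∀ n, 0 ≤ a n) (hlim : Tendsto a atTop (𝓝 0)) :
    ∃ (b : ℕ → ℝ) (c : ℕ → A), (∀ n, 0 ≤ b n) ∧ (∀ k, 0 ≤ c k) ∧
      Tendsto b atTop (𝓝 0) ∧ Tendsto c atTop (𝓝 0) ∧
      ∀ n k, a (n + k) ≤ (b n : ℂ) • c k := by
  obtain ⟨s, hs_pos, hs_anti, hs_bound, hs_lim⟩ :
      ∃ s : ℕ → ℝ, (∀ n, 0 < s n) ∧ Antitone s ∧ (∀ n m, n ≤ m → ‖a m‖ ≤ s n) ∧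
        Tendsto s atTop (𝓝 0) := by
    have hbdd : ∀ n : ℕ, BddAbove (Set.range fun m => ‖a (n + m)‖) := by
      intro n
      obtain ⟨C, hC⟩ := hlim.norm.bddAbove_range
      exact ⟨C, fun x ⟨m, hm⟩ => hm ▸ hC ⟨n + m, rfl⟩⟩
    set u : ℕ → ℝ := fun n => ⨆ m, ‖a (n + m)‖ with hu
    have hu_bound : ∀ n m, n ≤ m → ‖a m‖ ≤ u n := fun n m hnm => by
      have : ‖a (n + (m - n))‖ ≤ u n := le_ciSup (hbdd n) (m - n)
      rwa [Nat.add_sub_cancel' hnm] at this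
    have hu_nonneg : ∀ n, 0 ≤ u n := fun n => (norm_nonneg _).trans (hu_bound n n le_rfl)
    have hu_anti : Antitone u := by
      intro n m hnm
      refine ciSup_le fun i => ?_
      exact hu_bound n (m + i) (le_trans hnm (Nat.le_add_right m i))
    have hu_lim : Tendsto u atTop (𝓝 0) := by
      rw [Metric.tendsto_atTop] at hlim ⊢
      intro ε hε
      obtain ⟨N, hN⟩ := hlim (ε / 2) (by positivity)
      refine ⟨N, fun n hn => ?_⟩
      rw [Real.dist_eq, sub_zero, abs_of_nonneg (hu_nonneg n)]
      refine lt_of_le_of_lt (ciSup_le (fun m => ?_) : u n ≤ ε/2) (by linarith)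
      have := hN (n + m) (le_trans hn (Nat.le_add_right n m))
      rw [dist_eq_norm, sub_zero] at this
      exact this.le
    refine ⟨fun n => u n + (2⁻¹ : ℝ) ^ n, fun n => ?_, ?_, fun n m h => ?_, ?_⟩
    · have := hu_nonneg n; positivity
    · intro n m hnm
      exact add_le_add (hu_anti hnm) (pow_le_pow_of_le_one (by norm_num) (by norm_num) hnm)
    · exact (hu_bound n m h).trans (le_add_of_nonneg_right (by positivity))
    · simpa using hu_lim.add (tendsto_pow_atTop_nhds_zero_of_lt_one
        (by norm_num : (0:ℝ) ≤ 2⁻¹) (by norm_num))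
  exact aux_main a ha s hs_pos hs_anti hs_bound hs_lim
end

section
/- Let J be a closed two-sided ideal of a C*-algebra A with quotient map π : A → A/J. If A is a Z*-algebra but A/J is not a Z*-algebra, then J is a Z*-algebra. Equivalently, an extension of a non-Z*-algebra by a non-Z*-algebra is a non-Z*-algebra. -/
/-- In a non-unital C*-algebra, if `star x * a * x = 0` with `0 ≤ a`, then `a * x = 0`. -/
lemma aux_mul_eq_zero {A : Type*} [NonUnitalCStarAlgebra A] [PartialOrder A]
    [StarOrderedRing A] {a x : A} (ha : 0 ≤ a) (h : star x * a * x = 0) : a * x = 0 := by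
  have hs : CFC.sqrt a * CFC.sqrt a = a := CFC.sqrt_mul_sqrt_self a ha
  have hsa : star (CFC.sqrt a) = CFC.sqrt a :=
    (IsSelfAdjoint.of_nonneg (CFC.sqrt_nonneg a)).star_eq
  have key : star (CFC.sqrt a * x) * (CFC.sqrt a * x) = 0 := by
    calc star (CFC.sqrt a * x) * (CFC.sqrt a * x)
        = star x * (star (CFC.sqrt a) * CFC.sqrt a) * x := by
          simp only [star_mul, mul_assoc]
      _ = star x * a * x := by rw [hsa, hs, mul_assoc]
      _ = 0 := h
  have : CFC.sqrt a * x = 0 := (CStarRing.star_mul_self_eq_zero_iff _).mp key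
  calc a * x = CFC.sqrt a * (CFC.sqrt a * x) := by rw [← mul_assoc, hs]
    _ = 0 := by rw [this, mul_zero]

/-- An extension of a non-Z*-algebra by a non-Z*-algebra is a non-Z*-algebra.
Equivalently: if `π : A → B` is a surjective *-homomorphism of C*-algebras (so that `B`
is the quotient of `A` by the closed two-sided ideal `J = ker π`), `A` is a Z*-algebra,
and `B = A/J` is not a Z*-algebra, then `J` is a Z*-algebra: every positive `a ∈ J`
admits a nonzero `x ∈ J` with `a * x = 0`. -/
theorem stmt_18 {A B : Type*} [NonUnitalCStarAlgebra A] [PartialOrder A] [StarOrderedRing A]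
    [NonUnitalCStarAlgebra B] [PartialOrder B] [StarOrderedRing B]
    (π : A →⋆ₙₐ[ℂ] B) (hsurj : Function.Surjective π)
    (hA : ∀ a : A, 0 ≤ a → ∃ x : A, x ≠ 0 ∧ a * x = 0)
    (hB : ¬ ∀ b : B, 0 ≤ b → ∃ y : B, y ≠ 0 ∧ b * y = 0) :
    ∀ a : A, π a = 0 → 0 ≤ a → ∃ x : A, π x = 0 ∧ x ≠ 0 ∧ a * x = 0 := by
  push_neg at hB
  obtain ⟨b, hb, hbann⟩ := hB
  intro a haJ ha
  obtain ⟨c, hc⟩ := hsurj b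
  set t := star c * c with ht
  have htn : (0 : A) ≤ t := star_mul_self_nonneg c
  have hat : (0 : A) ≤ a + t := add_nonneg ha htn
  obtain ⟨x, hx0, hx⟩ := hA (a + t) hat
  -- conjugate by x
  have hconj : star x * a * x + star x * t * x = 0 := by
    rw [mul_assoc, mul_assoc, ← mul_add, ← add_mul, hx, mul_zero]
  have h1 : (0 : A) ≤ star x * a * x := star_left_conjugate_nonneg ha x
  have h2 : (0 : A) ≤ star x * t * x := star_left_conjugate_nonneg htn x
  have hax : star x * a * x = 0 := by
    have := (add_eq_zero_iff_of_nonneg h1 h2).mp hconj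
    exact this.1
  have htx : star x * t * x = 0 := by
    have := (add_eq_zero_iff_of_nonneg h1 h2).mp hconj
    exact this.2
  have hax0 : a * x = 0 := aux_mul_eq_zero ha hax
  -- from star x * (star c * c) * x = 0 get c * x = 0
  have hcx : c * x = 0 := by
    apply (CStarRing.star_mul_self_eq_zero_iff _).mp
    calc star (c * x) * (c * x) = star x * (star c * c) * x := by
          simp only [star_mul, mul_assoc]
      _ = 0 := htx
  have hπx : π x = 0 := by
    have : b * π x = 0 := by
      have := congrArg π hcx
      simpa [map_mul, hc] using this
    by_contra hne
    exact hbann _ hne this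
  exact ⟨x, hπx, hx0, hax0⟩
end

section
/- In M₄(ℂ) ≅ M₂(ℂ) ⊗ M₂(ℂ), let x be the positive matrix with entries x₁₁ = x₁₄ = x₄₁ = x₄₄ = 1 and all other entries 0. Then there exist no nonzero matrices a, b ∈ M₂(ℂ) such that 0 < a ⊗ b ≤ x (i.e., a ⊗ b is a nonzero positive matrix dominated by x). -/
open Matrix
open scoped Kronecker ComplexOrder

/-- The matrix `x = E₁₁ + E₁₄ + E₄₁ + E₄₄` in `M₄(ℂ) ≅ M₂(ℂ) ⊗ M₂(ℂ)`, written with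
index set `Fin 2 × Fin 2` where `(0,0)` corresponds to `1` and `(1,1)` to `4`. -/
def xMat : Matrix (Fin 2 × Fin 2) (Fin 2 × Fin 2) ℂ :=
  fun i j => if (i = (0, 0) ∨ i = (1, 1)) ∧ (j = (0, 0) ∨ j = (1, 1)) then 1 else 0

lemma aux_diag_nonneg {n : Type*} [Fintype n] [DecidableEq n] {M : Matrix n n ℂ}
    (hM : M.PosSemidef) (u : n) : 0 ≤ M u u := by
  have h := hM.dotProduct_mulVec_nonneg (Pi.single u 1)
  simpa [mulVec_single, dotProduct, Pi.single_apply, apply_ite] using h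

lemma aux_row_col {n : Type*} [Fintype n] [DecidableEq n] {M : Matrix n n ℂ}
    (hM : M.PosSemidef) (u : n) (h : M u u = 0) : ∀ i, M i u = 0 ∧ M u i = 0 := by
  have hq : star (Pi.single u (1:ℂ)) ⬝ᵥ M *ᵥ Pi.single u (1:ℂ) = 0 := by
    simp [mulVec_single, dotProduct, Pi.single_apply, apply_ite, h]
  have hv := (hM.dotProduct_mulVec_zero_iff _).mp hq
  intro i
  have hcol : M i u = 0 := by
    have := congrFun hv i
    simpa [mulVec_single] using this
  refine ⟨hcol, ?_⟩
  have h2 := congrFun (congrFun hM.isHermitian i) u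
  rw [conjTranspose_apply] at h2
  rw [← h2] at hcol
  exact star_eq_zero.mp hcol

/-- There are no nonzero `a, b ∈ M₂(ℂ)` with `0 < a ⊗ b ≤ x` in the Loewner order,
i.e. with `a ⊗ₖ b` positive semidefinite, nonzero, and `x - a ⊗ₖ b` positive
semidefinite. -/
theorem stmt_19 :
    ¬ ∃ a b : Matrix (Fin 2) (Fin 2) ℂ,
      (a ⊗ₖ b) ≠ 0 ∧ (a ⊗ₖ b).PosSemidef ∧ (xMat - a ⊗ₖ b).PosSemidef := by
  rintro ⟨a, b, hne, hM, hxM⟩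
  set M := a ⊗ₖ b with hMdef
  have hent : ∀ i j k l : Fin 2, M (i, j) (k, l) = a i k * b j l := by
    intro i j k l; simp [hMdef, kroneckerMap_apply]
  -- diagonal entries of M vanish where those of xMat do
  have hdiag0 : ∀ u : Fin 2 × Fin 2, xMat u u = 0 → M u u = 0 := by
    intro u hx
    have h1 := aux_diag_nonneg hM u
    have h2 := aux_diag_nonneg hxM u
    rw [Matrix.sub_apply, hx, zero_sub] at h2
    exact le_antisymm (neg_nonneg.mp h2) h1
  have hx01 : xMat ((0, 1) : Fin 2 × Fin 2) (0, 1) = 0 := by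
    simp [xMat, Prod.ext_iff]
  have hx10 : xMat ((1, 0) : Fin 2 × Fin 2) (1, 0) = 0 := by
    simp [xMat, Prod.ext_iff]
  have h01 := aux_row_col hM (0, 1) (hdiag0 _ hx01)
  have h10 := aux_row_col hM (1, 0) (hdiag0 _ hx10)
  have hA01 : ∀ k l : Fin 2, a 0 k * b 1 l = 0 := by
    intro k l; have := (h01 (k, l)).2; rwa [hent] at this
  have hA10 : ∀ k l : Fin 2, a 1 k * b 0 l = 0 := by
    intro k l; have := (h10 (k, l)).2; rwa [hent] at this
  -- the vector w = e₀₀ - e₁₁ is in the kernel of xMat, hence of M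
  set w : Fin 2 × Fin 2 → ℂ := fun p => if p = (0, 0) then 1 else if p = (1, 1) then -1 else 0
    with hw
  have hxw : xMat *ᵥ w = 0 := by
    funext u
    simp [mulVec, dotProduct, Fintype.sum_prod_type, Fin.sum_univ_two, xMat, hw, Prod.ext_iff]
  have hMw : M *ᵥ w = 0 := by
    have h2 := hxM.dotProduct_mulVec_nonneg w
    rw [sub_mulVec, dotProduct_sub, hxw, dotProduct_zero, zero_sub] at h2
    have h1 := hM.dotProduct_mulVec_nonneg w
    have h0 : star w ⬝ᵥ M *ᵥ w = 0 := le_antisymm (neg_nonneg.mp h2) h1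
    exact (hM.dotProduct_mulVec_zero_iff w).mp h0
  have hcoleq : ∀ u : Fin 2 × Fin 2, M u (0, 0) = M u (1, 1) := by
    intro u
    have := congrFun hMw u
    simp [mulVec, dotProduct, Fintype.sum_prod_type, Fin.sum_univ_two, hw, Prod.ext_iff] at this
    linear_combination this
  have hH : ∀ p q : Fin 2 × Fin 2, M q p = star (M p q) := by
    intro p q
    have h2 := congrFun (congrFun hM.isHermitian q) p
    rw [conjTranspose_apply] at h2
    exact h2.symm
  -- pick a nonzero entry
  obtain ⟨p, q, hpq⟩ : ∃ p q, M p q ≠ 0 := by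
    by_contra h
    push_neg at h
    exact hne (by ext p q; simpa using h p q)
  obtain ⟨i, j⟩ := p
  obtain ⟨k, l⟩ := q
  rw [hent] at hpq
  fin_cases i <;> fin_cases j
  · -- i = 0, j = 0
    obtain ⟨ha, hb⟩ := mul_ne_zero_iff.mp hpq
    have ha1 : ∀ k' : Fin 2, a 1 k' = 0 := fun k' => (mul_eq_zero.mp (hA10 k' l)).resolve_right hb
    have hb1 : ∀ l' : Fin 2, b 1 l' = 0 := fun l' => (mul_eq_zero.mp (hA01 k l')).resolve_left ha
    have h1 : M ((1, 1) : Fin 2 × Fin 2) (0, 0) = 0 := by rw [hent, ha1, zero_mul]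
    have h2 : M ((0, 0) : Fin 2 × Fin 2) (1, 1) = 0 := by rw [hH, h1, star_zero]
    have h3 : M ((0, 0) : Fin 2 × Fin 2) (0, 0) = 0 := by rw [hcoleq, h2]
    have h4 := (aux_row_col hM (0, 0) h3 (k, l)).2
    rw [hent] at h4
    exact hpq h4
  · -- i = 0, j = 1
    exact hpq (hA01 k l)
  · -- i = 1, j = 0
    exact hpq (hA10 k l)
  · -- i = 1, j = 1
    obtain ⟨ha, hb⟩ := mul_ne_zero_iff.mp hpq
    have ha0 : ∀ k' : Fin 2, a 0 k' = 0 := fun k' => (mul_eq_zero.mp (hA01 k' l)).resolve_right hb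
    have hb0 : ∀ l' : Fin 2, b 0 l' = 0 := fun l' => (mul_eq_zero.mp (hA10 k l')).resolve_left ha
    have h1 : M ((0, 0) : Fin 2 × Fin 2) (1, 1) = 0 := by rw [hent, ha0, zero_mul]
    have h2 : M ((1, 1) : Fin 2 × Fin 2) (0, 0) = 0 := by rw [hH, h1, star_zero]
    have h3 : M ((1, 1) : Fin 2 × Fin 2) (1, 1) = 0 := by rw [← hcoleq, h2]
    have h4 := (aux_row_col hM (1, 1) h3 (k, l)).2
    rw [hent] at h4
    exact hpq h4
end
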